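/- Let S be a finite shapeset all of whose shapes are potatoes. Then the set of scaling factors λ > 0 such that either some shape of λ·S (the set of shapes of S rescaled by λ) has two distinct maximal horizontal boundary segments whose heights differ by a nonzero integer, or two distinct maximal vertical boundary segments whose abscissas differ by a nonzero integer, or some shape of λ·S has diameter equal to an integer, is countable. In particular, there exist arbitrarily large λ > 0 avoiding all these conditions and such that, in addition, every shape of λ·S contains a translate of the closed unit square in its interior. -/

import Mathlib

open Metric Set

noncomputable section

/-- Points of the plane. Note that the product norm on `ℝ × ℝ` is the sup-norm. -/
abbrev Pt := ℝ × ℝ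

/-- A "shape candidate" is just a set of points of the plane. -/
abbrev GShape := Set Pt

/-- Translate of a set of points by `v`. -/
def shTranslate (v : Pt) (s : GShape) : GShape := (fun p => p + v) '' s

/-- `t` is a translate of `s`. -/
def IsTranslateOf (t s : GShape) : Prop := ∃ v : Pt, t = shTranslate v s

/-- A shape: a compact subset of the plane homeomorphic to the closed unit disk. -/
def IsShape (s : GShape) : Prop :=
  IsCompact s ∧ Nonempty (s ≃ₜ (Metric.closedBall (0 : EuclideanSpace ℝ (Fin 2)) 1))

/-- An `S`-tiling: a set of translates of shapes of `S` covering the plane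
with pairwise disjoint interiors. -/
def IsTiling (S : Set GShape) (T : Set GShape) : Prop :=
  (∀ t ∈ T, ∃ s ∈ S, IsTranslateOf t s) ∧
  ⋃₀ T = Set.univ ∧
  T.Pairwise (fun t t' => interior t ∩ interior t' = ∅)

/-- A pattern over `S`: a finite set of translates of shapes of `S` with pairwise
disjoint interiors whose support is connected and simply connected. -/
def IsPattern (S : Set GShape) (P : Set GShape) : Prop :=
  P.Finite ∧
  (∀ t ∈ P, ∃ s ∈ S, IsTranslateOf t s) ∧
  P.Pairwise (fun t t' => interior t ∩ interior t' = ∅) ∧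
  IsConnected (⋃₀ P) ∧ SimplyConnectedSpace (⋃₀ P)

/-- Translate of a pattern (or a tiling). -/
def patTranslate (v : Pt) (P : Set GShape) : Set GShape := (shTranslate v) '' P

/-- `P` appears (up to translation) in the tiling `T`. -/
def AppearsIn (P T : Set GShape) : Prop := ∃ v : Pt, patTranslate v P ⊆ T

/-- `P` appears in some tiling of `X`. -/
def AppearsInSome (P : Set GShape) (X : Set (Set GShape)) : Prop := ∃ T ∈ X, AppearsIn P T

/-- A family of patterns is finite up to translation. -/
def FiniteUpToTranslation (Ps : Set (Set GShape)) : Prop :=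
  ∃ F : Set (Set GShape), F.Finite ∧ ∀ P ∈ Ps, ∃ Q ∈ F, ∃ v : Pt, P = patTranslate v Q

/-- Finite local complexity of a set `X` of tilings on the shapeset `S`:
for every compact `K`, there are finitely many patterns, up to translation,
appearing in tilings of `X` with support included in `K`. -/
def HasFLC (S : Set GShape) (X : Set (Set GShape)) : Prop :=
  ∀ K : Set Pt, IsCompact K →
    FiniteUpToTranslation {P | IsPattern S P ∧ AppearsInSome P X ∧ ⋃₀ P ⊆ K}

/-- A horizontal (nondegenerate, closed) segment. -/
def IsHorizSeg (s : Set Pt) : Prop := ∃ y a b : ℝ, a < b ∧ s = Set.Icc a b ×ˢ ({y} : Set ℝ)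

/-- A vertical (nondegenerate, closed) segment. -/
def IsVertSeg (s : Set Pt) : Prop := ∃ x a b : ℝ, a < b ∧ s = ({x} : Set ℝ) ×ˢ Set.Icc a b

/-- A maximal horizontal segment included in `B`. -/
def IsMaximalHorizSegOf (B s : Set Pt) : Prop :=
  IsHorizSeg s ∧ s ⊆ B ∧ ∀ s', IsHorizSeg s' → s' ⊆ B → s ⊆ s' → s' = s

/-- A maximal vertical segment included in `B`. -/
def IsMaximalVertSegOf (B s : Set Pt) : Prop :=
  IsVertSeg s ∧ s ⊆ B ∧ ∀ s', IsVertSeg s' → s' ⊆ B → s ⊆ s' → s' = s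

/-- A potato: a shape whose boundary contains at most countably many maximal
horizontal and maximal vertical segments. -/
def IsPotato (s : GShape) : Prop :=
  IsShape s ∧
  {seg : Set Pt | IsMaximalHorizSegOf (frontier s) seg}.Countable ∧
  {seg : Set Pt | IsMaximalVertSegOf (frontier s) seg}.Countable

/-- Rescaling of a shape by a factor `lam`. -/
def scaleShape (lam : ℝ) (s : GShape) : GShape := (fun p => lam • p) '' s

/-- The closed unit square. -/
def unitSquare : Set Pt := Set.Icc (0:ℝ) 1 ×ˢ Set.Icc (0:ℝ) 1

/-- The set of bad scaling factors for the shapeset `S`: factors `lam > 0` such that some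
shape of `lam • S` has two distinct maximal horizontal boundary segments whose heights
differ by a nonzero integer, or two distinct maximal vertical boundary segments whose
abscissas differ by a nonzero integer, or some shape of `lam • S` has integer diameter
(sup-norm). -/
def BadScalings (S : Set GShape) : Set ℝ :=
  {lam : ℝ | 0 < lam ∧
    ((∃ s ∈ S, ∃ g₁ g₂ : Set Pt,
        IsMaximalHorizSegOf (frontier (scaleShape lam s)) g₁ ∧
        IsMaximalHorizSegOf (frontier (scaleShape lam s)) g₂ ∧ g₁ ≠ g₂ ∧
        ∃ y₁ y₂ : ℝ, (∀ p ∈ g₁, Prod.snd p = y₁) ∧ (∀ p ∈ g₂, Prod.snd p = y₂) ∧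
          ∃ n : ℤ, n ≠ 0 ∧ y₁ - y₂ = (n : ℝ)) ∨
     (∃ s ∈ S, ∃ g₁ g₂ : Set Pt,
        IsMaximalVertSegOf (frontier (scaleShape lam s)) g₁ ∧
        IsMaximalVertSegOf (frontier (scaleShape lam s)) g₂ ∧ g₁ ≠ g₂ ∧
        ∃ x₁ x₂ : ℝ, (∀ p ∈ g₁, Prod.fst p = x₁) ∧ (∀ p ∈ g₂, Prod.fst p = x₂) ∧
          ∃ n : ℤ, n ≠ 0 ∧ x₁ - x₂ = (n : ℝ)) ∨
     (∃ s ∈ S, ∃ n : ℤ, Metric.diam (scaleShape lam s) = (n : ℝ)))}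

section
open Complex Pointwise

namespace PotatoAux

/-- `d` is the variation of a continuous logarithm of `γ` along `[0,1]`. -/
def Delta (γ : ℝ → ℂ) (d : ℂ) : Prop :=
  ∃ L : ℝ → ℂ, ContinuousOn L (Icc 0 1) ∧ (∀ t ∈ Icc (0:ℝ) 1, Complex.exp (L t) = γ t) ∧
    d = L 1 - L 0

/-- A continuous integer-valued function on an interval is constant. -/
lemma intValued_const {f : ℝ → ℝ} {a b : ℝ} (hab : a ≤ b) (hf : ContinuousOn f (Icc a b))
    (hint : ∀ t ∈ Icc a b, ∃ k : ℤ, f t = k) : f a = f b := by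
  have ha : a ∈ Icc a b := ⟨le_refl a, hab⟩
  have hb : b ∈ Icc a b := ⟨hab, le_refl b⟩
  obtain ⟨ka, hka⟩ := hint a ha
  obtain ⟨kb, hkb⟩ := hint b hb
  by_contra hne
  have hkk : ka ≠ kb := by
    intro h; apply hne; rw [hka, hkb, h]
  rcases lt_or_gt_of_ne hkk with h | h
  · -- ka < kb : value (ka:ℝ)+1/2 between f a and f b
    have hmem : ((ka : ℝ) + 1/2) ∈ Icc (f a) (f b) := by
      constructor
      · rw [hka]; linarith
      · rw [hkb]
        have : (ka : ℝ) + 1 ≤ kb := by exact_mod_cast h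
        linarith
    obtain ⟨t, ht, hft⟩ := intermediate_value_Icc hab hf hmem
    obtain ⟨k, hk⟩ := hint t ht
    rw [hk] at hft
    have : (2*k : ℝ) = 2*ka + 1 := by linarith
    have : (2*k : ℤ) = 2*ka + 1 := by exact_mod_cast this
    omega
  · have hmem : ((kb : ℝ) + 1/2) ∈ Icc (f b) (f a) := by
      constructor
      · rw [hkb]; linarith
      · rw [hka]
        have : (kb : ℝ) + 1 ≤ ka := by exact_mod_cast h
        linarith
    obtain ⟨t, ht, hft⟩ := intermediate_value_Icc' hab hf hmem
    obtain ⟨k, hk⟩ := hint t ht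
    rw [hk] at hft
    have : (2*k : ℝ) = 2*kb + 1 := by linarith
    have : (2*k : ℤ) = 2*kb + 1 := by exact_mod_cast this
    omega

lemma two_pi_I_ne_zero : (2 * (Real.pi : ℂ) * Complex.I) ≠ 0 := by
  simp [Real.pi_ne_zero, Complex.I_ne_zero, Complex.ofReal_ne_zero]

lemma delta_unique {γ : ℝ → ℂ} {d d' : ℂ} (h : Delta γ d) (h' : Delta γ d') : d = d' := by
  obtain ⟨L, hL, hLe, rfl⟩ := h
  obtain ⟨L', hL', hLe', rfl⟩ := h'
  -- the function (L - L')/(2πi) is continuous and integer valued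
  set c : ℂ := 2 * (Real.pi : ℂ) * Complex.I with hc
  have hcne : c ≠ 0 := two_pi_I_ne_zero
  set f : ℝ → ℝ := fun t => ((L t - L' t) / c).re with hf
  have hint : ∀ t ∈ Icc (0:ℝ) 1, ∃ k : ℤ, f t = k := by
    intro t ht
    have h1 : Complex.exp (L t - L' t) = 1 := by
      rw [Complex.exp_sub, hLe t ht, hLe' t ht, div_self]
      rw [← hLe' t ht]; exact Complex.exp_ne_zero _
    obtain ⟨n, hn⟩ := Complex.exp_eq_one_iff.mp h1
    refine ⟨n, ?_⟩
    simp only [hf, hn, hc]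
    rw [mul_div_assoc, div_self hcne]
    simp
  have hcont : ContinuousOn f (Icc 0 1) :=
    (Complex.continuous_re.comp_continuousOn ((hL.sub hL').div_const c))
  have h01 := intValued_const zero_le_one hcont hint
  obtain ⟨k0, hk0⟩ := hint 0 (by constructor <;> norm_num)
  obtain ⟨k1, hk1⟩ := hint 1 (by constructor <;> norm_num)
  -- recover: L t - L' t = f t * c
  have key : ∀ t ∈ Icc (0:ℝ) 1, L t - L' t = (f t : ℂ) * c := by
    intro t ht
    have h1 : Complex.exp (L t - L' t) = 1 := by
      rw [Complex.exp_sub, hLe t ht, hLe' t ht, div_self]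
      rw [← hLe' t ht]; exact Complex.exp_ne_zero _
    obtain ⟨n, hn⟩ := Complex.exp_eq_one_iff.mp h1
    have hfn : f t = (n : ℝ) := by
      simp only [hf, hn, hc]
      rw [mul_div_assoc, div_self hcne]
      simp
    rw [hn, hfn]; norm_num; exact Or.inl hc.symm
  have e0 := key 0 (by constructor <;> norm_num)
  have e1 := key 1 (by constructor <;> norm_num)
  have : L 1 - L' 1 = L 0 - L' 0 := by rw [e0, e1, h01]
  linear_combination this

lemma delta_const {z : ℂ} (hz : z ≠ 0) : Delta (fun _ => z) 0 :=
  ⟨fun _ => Complex.log z, continuousOn_const, fun t _ => Complex.exp_log hz, by ring⟩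

/-- norm-based slit plane membership -/
lemma mem_slitPlane_of_close {q : ℂ} (h : ‖q - 1‖ < 1) : q ∈ Complex.slitPlane := by
  rw [Complex.mem_slitPlane_iff]
  left
  have h1 : |(q - 1).re| ≤ ‖q - 1‖ := Complex.abs_re_le_norm _
  have h2 : (q - 1).re = q.re - 1 := by simp
  have := abs_le.mp h1
  linarith [this.1]

lemma delta_exists {γ : ℝ → ℂ} (hγ : ContinuousOn γ (Icc 0 1))
    (hnz : ∀ t ∈ Icc (0:ℝ) 1, γ t ≠ 0) : ∃ d, Delta γ d := by
  obtain ⟨t₀, ht₀, hmin'⟩ := isCompact_Icc.exists_isMinOn (f := fun t => ‖γ t‖)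
    (nonempty_Icc.mpr zero_le_one) (continuous_norm.comp_continuousOn hγ)
  have hmin : ∀ t ∈ Icc (0:ℝ) 1, ‖γ t₀‖ ≤ ‖γ t‖ := fun t ht => hmin' ht
  set m : ℝ := ‖γ t₀‖ with hm
  have hmpos : 0 < m := norm_pos_iff.mpr (hnz t₀ ht₀)
  have huc := (isCompact_Icc.uniformContinuousOn_of_continuous hγ)
  rw [Metric.uniformContinuousOn_iff] at huc
  obtain ⟨δ, hδpos, hδ⟩ := huc m hmpos
  obtain ⟨n, hn⟩ := exists_nat_one_div_lt hδpos
  set N : ℕ := n + 1 with hN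
  have hNpos : (0:ℝ) < N := by positivity
  have hstep : (1:ℝ)/N < δ := by exact_mod_cast hn
  set u : ℕ → ℝ → ℝ := fun j t => min t (j / N) with hu
  have humem : ∀ j, ∀ t ∈ Icc (0:ℝ) 1, u j t ∈ Icc (0:ℝ) 1 := by
    intro j t ht
    exact ⟨le_min ht.1 (by positivity), min_le_of_left_le ht.2⟩
  have hmono : ∀ j t, u j t ≤ u (j+1) t := by
    intro j t
    apply min_le_min (le_refl t)
    apply div_le_div_of_nonneg_right _ hNpos.le
    exact_mod_cast Nat.le_succ j
  have huclose : ∀ j t, dist (u (j+1) t) (u j t) < δ := by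
    intro j t
    have h2 : u (j+1) t - u j t ≤ 1/N := by
      rcases le_total t ((j:ℝ)/N) with h | h
      · have e1 : u (j+1) t = t := min_eq_left (le_trans h
          (div_le_div_of_nonneg_right (by exact_mod_cast Nat.le_succ j) hNpos.le))
        have e2 : u j t = t := min_eq_left h
        rw [e1, e2]; simp only [sub_self]; positivity
      · have e2 : u j t = (j:ℝ)/N := min_eq_right h
        have e1 : u (j+1) t ≤ ((j:ℝ)+1)/N := by
          apply min_le_of_right_le
          apply le_of_eq; push_cast; ring
        rw [e2]
        have : ((j:ℝ)+1)/N - (j:ℝ)/N = 1/N := by field_simp; ring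
        linarith
    rw [Real.dist_eq, _root_.abs_of_nonneg (sub_nonneg.mpr (hmono j t))]
    linarith
  -- key facts about the ratios
  have hratio : ∀ j, ∀ t ∈ Icc (0:ℝ) 1, ‖γ (u (j+1) t) / γ (u j t) - 1‖ < 1 := by
    intro j t ht
    have hj := humem j t ht
    have hj1 := humem (j+1) t ht
    have hne : γ (u j t) ≠ 0 := hnz _ hj
    have hdist : ‖γ (u (j+1) t) - γ (u j t)‖ < m := by
      have := hδ _ hj1 _ hj (huclose j t)
      rwa [dist_eq_norm] at this
    have heq : γ (u (j+1) t) / γ (u j t) - 1 = (γ (u (j+1) t) - γ (u j t)) / γ (u j t) := by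
      field_simp
    rw [heq, norm_div, div_lt_one (norm_pos_iff.mpr hne)]
    exact lt_of_lt_of_le hdist (hmin _ hj)
  set L : ℝ → ℂ := fun t => Complex.log (γ 0) +
      ∑ j ∈ Finset.range N, Complex.log (γ (u (j+1) t) / γ (u j t)) with hL
  refine ⟨L 1 - L 0, L, ?_, ?_, rfl⟩
  · -- continuity
    apply ContinuousOn.add continuousOn_const
    apply continuousOn_finset_sum
    intro j _
    have hcu : ∀ i : ℕ, ContinuousOn (fun t => γ (u i t)) (Icc 0 1) := by
      intro i
      exact hγ.comp ((continuous_id.min continuous_const).continuousOn) (humem i)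
    apply ContinuousOn.clog ((hcu (j+1)).div (hcu j) (fun t ht => hnz _ (humem j t ht)))
    intro t ht
    exact mem_slitPlane_of_close (hratio j t ht)
  · -- exp ∘ L = γ
    intro t ht
    have hqne : ∀ j, γ (u (j+1) t) / γ (u j t) ≠ 0 := fun j =>
      div_ne_zero (hnz _ (humem (j+1) t ht)) (hnz _ (humem j t ht))
    have h0mem : (0:ℝ) ∈ Icc (0:ℝ) 1 := ⟨le_refl _, zero_le_one⟩
    rw [hL, Complex.exp_add, Complex.exp_sum, Complex.exp_log (hnz 0 h0mem)]
    have hprod : ∀ k : ℕ, γ 0 * ∏ j ∈ Finset.range k,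
        Complex.exp (Complex.log (γ (u (j+1) t) / γ (u j t))) = γ (u k t) := by
      intro k
      induction k with
      | zero =>
        simp only [Finset.range_zero, Finset.prod_empty, mul_one]
        congr 1
        simp only [hu]
        rw [Nat.cast_zero, zero_div, min_eq_right ht.1]
      | succ k ih =>
        rw [Finset.prod_range_succ, ← mul_assoc, ih, Complex.exp_log (hqne k),
          mul_div_cancel₀ _ (hnz _ (humem k t ht))]
    rw [hprod N]
    congr 1
    simp only [hu]
    rw [div_self (ne_of_gt hNpos), min_eq_left ht.2]

lemma ratio_facts {γ₁ γ₂ : ℝ → ℂ} {t : ℝ} (h1 : γ₁ t ≠ 0)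
    (hcl : ‖γ₂ t - γ₁ t‖ < ‖γ₁ t‖) :
    γ₂ t ≠ 0 ∧ ‖γ₂ t / γ₁ t - 1‖ < 1 := by
  constructor
  · intro h; rw [h] at hcl; simp only [zero_sub, norm_neg] at hcl; exact absurd hcl (lt_irrefl _)
  · have heq : γ₂ t / γ₁ t - 1 = (γ₂ t - γ₁ t) / γ₁ t := by field_simp
    rw [heq, norm_div, div_lt_one (norm_pos_iff.mpr h1)]
    exact hcl

lemma delta_leash {γ₁ γ₂ : ℝ → ℂ} {d : ℂ}
    (hγ₂ : ContinuousOn γ₂ (Icc 0 1))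
    (hnz : ∀ t ∈ Icc (0:ℝ) 1, γ₁ t ≠ 0)
    (hcl : ∀ t ∈ Icc (0:ℝ) 1, ‖γ₂ t - γ₁ t‖ < ‖γ₁ t‖)
    (hl₁ : γ₁ 1 = γ₁ 0) (hl₂ : γ₂ 1 = γ₂ 0)
    (h : Delta γ₁ d) : Delta γ₂ d := by
  obtain ⟨L, hL, hLe, rfl⟩ := h
  have hγ₁ : ContinuousOn γ₁ (Icc 0 1) := by
    apply ContinuousOn.congr (Complex.continuous_exp.comp_continuousOn hL)
    intro t ht
    exact (hLe t ht).symm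
  set q : ℝ → ℂ := fun t => γ₂ t / γ₁ t with hq
  have hqcont : ContinuousOn q (Icc 0 1) := hγ₂.div hγ₁ hnz
  refine ⟨fun t => L t + Complex.log (q t), ?_, ?_, ?_⟩
  · apply hL.add
    apply hqcont.clog
    intro t ht
    exact mem_slitPlane_of_close ((ratio_facts (hnz t ht) (hcl t ht)).2)
  · intro t ht
    have h2 := (ratio_facts (hnz t ht) (hcl t ht)).1
    rw [Complex.exp_add, hLe t ht, Complex.exp_log (div_ne_zero h2 (hnz t ht))]
    exact mul_div_cancel₀ _ (hnz t ht)
  · have hq10 : q 1 = q 0 := by simp only [hq]; rw [hl₁, hl₂]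
    simp only []
    rw [hq10]; ring

lemma delta_homotopy {H : ℝ → ℝ → ℂ} {d₀ d₁ : ℂ}
    (hH : ContinuousOn (fun p : ℝ × ℝ => H p.1 p.2) (Icc 0 1 ×ˢ Icc 0 1))
    (hnz : ∀ u ∈ Icc (0:ℝ) 1, ∀ t ∈ Icc (0:ℝ) 1, H u t ≠ 0)
    (hloop : ∀ u ∈ Icc (0:ℝ) 1, H u 1 = H u 0)
    (h₀ : Delta (H 0) d₀) (h₁ : Delta (H 1) d₁) : d₀ = d₁ := by
  set Q : Set (ℝ × ℝ) := Icc (0:ℝ) 1 ×ˢ Icc (0:ℝ) 1 with hQ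
  have hQc : IsCompact Q := isCompact_Icc.prod isCompact_Icc
  have hQne : Q.Nonempty := ⟨(0,0), by constructor <;> exact ⟨le_refl _, zero_le_one⟩⟩
  obtain ⟨p₀, hp₀, hmin'⟩ := hQc.exists_isMinOn (f := fun p => ‖H p.1 p.2‖)
    hQne (continuous_norm.comp_continuousOn hH)
  set m : ℝ := ‖H p₀.1 p₀.2‖ with hm
  have hmpos : 0 < m := norm_pos_iff.mpr (hnz _ hp₀.1 _ hp₀.2)
  have hmin : ∀ p ∈ Q, m ≤ ‖H p.1 p.2‖ := fun p hp => hmin' hp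
  have huc := hQc.uniformContinuousOn_of_continuous hH
  rw [Metric.uniformContinuousOn_iff] at huc
  obtain ⟨δ, hδpos, hδ⟩ := huc m hmpos
  obtain ⟨n, hn⟩ := exists_nat_one_div_lt hδpos
  set N : ℕ := n + 1 with hN
  have hNpos : (0:ℝ) < N := by positivity
  have hstep : (1:ℝ)/N < δ := by exact_mod_cast hn
  have hcont_slice : ∀ v ∈ Icc (0:ℝ) 1, ContinuousOn (H v) (Icc 0 1) := by
    intro v hv
    have : ContinuousOn (fun t : ℝ => (v, t)) (Icc 0 1) :=
      (continuous_const.prodMk continuous_id).continuousOn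
    exact hH.comp this (fun t ht => ⟨hv, ht⟩)
  -- induction over the grid
  have key : ∀ k : ℕ, k ≤ N → ∀ d, Delta (H ((k:ℝ)/N)) d → d₀ = d := by
    intro k
    induction k with
    | zero =>
      intro _ d hd
      apply delta_unique h₀
      have : ((0:ℕ):ℝ)/N = 0 := by simp
      rwa [this] at hd
    | succ k ih =>
      intro hk d hd
      have hk' : k ≤ N := Nat.le_of_succ_le hk
      have hmemk : ((k:ℝ)/N) ∈ Icc (0:ℝ) 1 := by
        constructor
        · positivity
        · rw [div_le_one hNpos]; exact_mod_cast hk'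
      have hmemk1 : (((k+1:ℕ)):ℝ)/N ∈ Icc (0:ℝ) 1 := by
        constructor
        · positivity
        · rw [div_le_one hNpos]; exact_mod_cast hk
      obtain ⟨dk, hdk⟩ := delta_exists (hcont_slice _ hmemk)
        (fun t ht => hnz _ hmemk t ht)
      have hstep2 : ∀ t ∈ Icc (0:ℝ) 1,
          ‖H (((k+1:ℕ):ℝ)/N) t - H ((k:ℝ)/N) t‖ < ‖H ((k:ℝ)/N) t‖ := by
        intro t ht
        have hd1 : dist ((((k+1:ℕ)):ℝ)/N, t) (((k:ℝ)/N), t) < δ := by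
          rw [Prod.dist_eq]
          simp only [dist_self]
          rw [sup_eq_left.mpr dist_nonneg, Real.dist_eq]
          have heq : (((k+1:ℕ)):ℝ)/N - ((k:ℝ)/N) = 1/N := by push_cast; field_simp; ring
          rw [heq, _root_.abs_of_nonneg (by positivity : (0:ℝ) ≤ 1/N)]
          exact hstep
        have := hδ _ ⟨hmemk1, ht⟩ _ ⟨hmemk, ht⟩ hd1
        rw [dist_eq_norm] at this
        calc ‖H (((k+1:ℕ):ℝ)/N) t - H ((k:ℝ)/N) t‖ < m := this
        _ ≤ ‖H ((k:ℝ)/N) t‖ := hmin (((k:ℝ)/N), t) ⟨hmemk, ht⟩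
      have hd' : Delta (H (((k+1:ℕ):ℝ)/N)) dk :=
        delta_leash (hcont_slice _ hmemk1) (fun t ht => hnz _ hmemk t ht)
          hstep2 (hloop _ hmemk) (hloop _ hmemk1) hdk
      have := ih hk' dk hdk
      rw [this]
      exact delta_unique hd' hd
  have hNN : ((N:ℝ))/N = 1 := div_self (ne_of_gt hNpos)
  have := key N (le_refl N) d₁ (by rwa [hNN])
  exact this

lemma delta_borsuk {φ : ℝ → ℂ} {d : ℂ}
    (hnz : ∀ t ∈ Icc (0:ℝ) 1, φ t ≠ 0)
    (hodd : ∀ t ∈ Icc (0:ℝ) (1/2), φ (t + 1/2) = -φ t)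
    (h : Delta φ d) : d ≠ 0 := by
  obtain ⟨L, hL, hLe, rfl⟩ := h
  set c : ℂ := 2 * (Real.pi : ℂ) * Complex.I with hc
  have hcne : c ≠ 0 := by
    simp [hc, Real.pi_ne_zero, Complex.I_ne_zero, Complex.ofReal_ne_zero]
  set D : ℝ → ℂ := fun t => L (t + 1/2) - L t with hD
  have hsubmem : ∀ t ∈ Icc (0:ℝ) (1/2), t ∈ Icc (0:ℝ) 1 := by
    intro t ht; exact ⟨ht.1, by linarith [ht.2]⟩
  have hsubmem' : ∀ t ∈ Icc (0:ℝ) (1/2), t + 1/2 ∈ Icc (0:ℝ) 1 := by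
    intro t ht; exact ⟨by linarith [ht.1], by linarith [ht.2]⟩
  have hexpD : ∀ t ∈ Icc (0:ℝ) (1/2), Complex.exp (D t) = -1 := by
    intro t ht
    rw [hD]
    simp only
    rw [Complex.exp_sub, hLe _ (hsubmem' t ht), hLe _ (hsubmem t ht), hodd t ht,
      neg_div, div_self (hnz t (hsubmem t ht))]
  -- D t = (odd integer) * π I ; use f t := ((D t - π I)/c).re
  have hval : ∀ t ∈ Icc (0:ℝ) (1/2), ∃ k : ℤ, D t = (2*k+1) * Real.pi * Complex.I := by
    intro t ht
    have h1 : Complex.exp (D t - Real.pi * Complex.I) = 1 := by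
      rw [Complex.exp_sub, hexpD t ht, Complex.exp_pi_mul_I]
      norm_num
    obtain ⟨n, hn⟩ := Complex.exp_eq_one_iff.mp h1
    refine ⟨n, ?_⟩
    have : D t = n * (2 * Real.pi * Complex.I) + Real.pi * Complex.I := by
      linear_combination hn
    rw [this]; push_cast; ring
  set f : ℝ → ℝ := fun t => ((D t - Real.pi * Complex.I)/c).re with hf
  have hfc : ContinuousOn f (Icc 0 (1/2)) := by
    apply Complex.continuous_re.comp_continuousOn
    apply ContinuousOn.div_const
    apply ContinuousOn.sub _ continuousOn_const
    apply ContinuousOn.sub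
    · exact hL.comp (continuous_id.add continuous_const).continuousOn
        (fun t ht => hsubmem' t ht)
    · exact hL.mono (fun t ht => hsubmem t ht)
  have hfint : ∀ t ∈ Icc (0:ℝ) (1/2), ∃ k : ℤ, f t = k := by
    intro t ht
    obtain ⟨k, hk⟩ := hval t ht
    refine ⟨k, ?_⟩
    simp only [hf, hk]
    have : ((2*(k:ℂ)+1) * Real.pi * Complex.I - Real.pi * Complex.I) / c = k := by
      rw [hc]; field_simp; ring
    rw [this]; simp
  have hconst := intValued_const (by norm_num : (0:ℝ) ≤ 1/2) hfc hfint
  obtain ⟨k0, hk0⟩ := hval 0 ⟨le_refl _, by norm_num⟩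
  obtain ⟨kh, hkh⟩ := hval (1/2) ⟨by norm_num, le_refl _⟩
  have hf0 : f 0 = (k0:ℝ) := by
    simp only [hf, hk0]
    have : ((2*(k0:ℂ)+1) * Real.pi * Complex.I - Real.pi * Complex.I) / c = k0 := by
      rw [hc]; field_simp; ring
    rw [this]; simp
  have hfh : f (1/2) = (kh:ℝ) := by
    simp only [hf, hkh]
    have : ((2*(kh:ℂ)+1) * Real.pi * Complex.I - Real.pi * Complex.I) / c = kh := by
      rw [hc]; field_simp; ring
    rw [this]; simp
  have hkk : k0 = kh := by
    have : (k0:ℝ) = kh := by rw [← hf0, ← hfh, hconst]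
    exact_mod_cast this
  -- total
  have htot : L 1 - L 0 = D (1/2) + D 0 := by
    simp only [hD]
    norm_num
  rw [htot, hkh, hk0, ← hkk]
  intro hcontra
  have : ((2*(k0:ℂ)+1) * Real.pi * Complex.I) * 2 = 0 := by linear_combination hcontra
  have h2 : (2*(k0:ℂ)+1) = 0 ∨ (Real.pi : ℂ) = 0 ∨ Complex.I = 0 ∨ (2:ℂ) = 0 := by
    rcases mul_eq_zero.mp this with h | h
    · rcases mul_eq_zero.mp h with h' | h'
      · rcases mul_eq_zero.mp h' with h'' | h''
        · exact Or.inl h''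
        · exact Or.inr (Or.inl h'')
      · exact Or.inr (Or.inr (Or.inl h'))
    · exact Or.inr (Or.inr (Or.inr h))
  rcases h2 with h | h | h | h
  · have : (2*k0+1 : ℤ) = 0 := by exact_mod_cast h
    omega
  · exact Complex.ofReal_ne_zero.mpr Real.pi_ne_zero h
  · exact Complex.I_ne_zero h
  · norm_num at h

/-- The standard unit-circle loop. -/
def circ (t : ℝ) : ℂ := Complex.exp ((2 * Real.pi * t : ℝ) * Complex.I)

lemma circ_cont : Continuous circ := by
  apply Complex.continuous_exp.comp
  exact (Complex.continuous_ofReal.comp (by continuity)).mul continuous_const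

lemma circ_norm (t : ℝ) : ‖circ t‖ = 1 := by
  have := Complex.norm_exp_ofReal_mul_I (2 * Real.pi * t)
  simpa [circ] using this

lemma circ_ne_zero (t : ℝ) : circ t ≠ 0 := Complex.exp_ne_zero _

lemma circ_mem_closedBall (t : ℝ) : circ t ∈ closedBall (0:ℂ) 1 := by
  rw [mem_closedBall_zero_iff, circ_norm]

lemma circ_antiperiodic (t : ℝ) : circ (t + 1/2) = -circ t := by
  have : ((2 * Real.pi * (t + 1/2) : ℝ) : ℂ) * Complex.I
      = (2 * Real.pi * t : ℝ) * Complex.I + Real.pi * Complex.I := by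
    push_cast; ring
  rw [circ, this, Complex.exp_add, Complex.exp_pi_mul_I, circ]
  ring

lemma circ_loop : circ 1 = circ 0 := by
  have h1 : circ 1 = Complex.exp (2 * Real.pi * Complex.I) := by
    rw [circ]; norm_num
  have h0 : circ 0 = 1 := by rw [circ]; norm_num [Complex.exp_zero]
  rw [h1, h0, Complex.exp_two_pi_mul_I]

theorem ball_subset_image_closedBall {g : ℂ → ℂ}
    (hg : ContinuousOn g (closedBall 0 1))
    (hinj : InjOn g (closedBall 0 1)) :
    ∃ r > 0, ball (g 0) r ⊆ g '' closedBall 0 1 := by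
  have h0D : (0:ℂ) ∈ closedBall (0:ℂ) 1 := mem_closedBall_self zero_le_one
  have hsub : sphere (0:ℂ) 1 ⊆ closedBall (0:ℂ) 1 := sphere_subset_closedBall
  -- the boundary curve image
  set C : Set ℂ := g '' sphere 0 1 with hC
  have hCc : IsCompact C := (isCompact_sphere _ _).image_of_continuousOn (hg.mono hsub)
  have hCne : C.Nonempty := ⟨g 1, 1, by simp, rfl⟩
  have hg0C : g 0 ∉ C := by
    rintro ⟨x, hx, hgx⟩
    have : x = 0 := hinj (hsub hx) h0D hgx
    rw [this] at hx
    simp at hx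
  set r : ℝ := infDist (g 0) C with hr
  have hrpos : 0 < r := (hCc.isClosed.notMem_iff_infDist_pos hCne).mp hg0C
  refine ⟨r, hrpos, ?_⟩
  -- membership of scaled points in disk
  have hmem1 : ∀ u ∈ Icc (0:ℝ) 1, ∀ t : ℝ, ((u:ℂ) * circ t) ∈ closedBall (0:ℂ) 1 := by
    intro u hu t
    rw [mem_closedBall_zero_iff, norm_mul, circ_norm, mul_one, Complex.norm_real,
      Real.norm_eq_abs, _root_.abs_of_nonneg hu.1]
    exact hu.2
  have hmem2 : ∀ u ∈ Icc (0:ℝ) 1, ∀ t : ℝ, (-(u:ℂ) * circ t) ∈ closedBall (0:ℂ) 1 := by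
    intro u hu t
    have := hmem1 u hu t
    rw [mem_closedBall_zero_iff] at this ⊢
    rw [neg_mul, norm_neg]
    exact this
  -- continuity helper
  have hcircmap : Continuous (fun p : ℝ × ℝ => (p.1 : ℂ) * circ p.2) := by
    exact (Complex.continuous_ofReal.comp continuous_fst).mul (circ_cont.comp continuous_snd)
  -- the odd loop and its delta
  set φ : ℝ → ℂ := fun t => g (circ t) - g (-circ t) with hφ
  have hφnz : ∀ t ∈ Icc (0:ℝ) 1, φ t ≠ 0 := by
    intro t _ h
    have heq : g (circ t) = g (-circ t) := by
      have := sub_eq_zero.mp h; exact this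
    have h2 : circ t = -circ t := hinj (circ_mem_closedBall t)
      (by simpa using hmem2 1 ⟨zero_le_one, le_refl _⟩ t) heq
    have : (2:ℂ) * circ t = 0 := by linear_combination h2
    rcases mul_eq_zero.mp this with h' | h'
    · norm_num at h'
    · exact circ_ne_zero t h'
  have hφcont : ContinuousOn φ (Icc 0 1) := by
    apply ContinuousOn.sub
    · exact hg.comp (circ_cont.continuousOn) (fun t _ => circ_mem_closedBall t)
    · exact hg.comp ((circ_cont.neg).continuousOn) (fun t _ => by
        simpa using hmem2 1 ⟨zero_le_one, le_refl _⟩ t)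
  obtain ⟨dφ, hdφ⟩ := delta_exists hφcont hφnz
  have hdφne : dφ ≠ 0 := by
    apply delta_borsuk hφnz _ hdφ
    intro t _
    simp only [hφ]
    rw [circ_antiperiodic, neg_neg]
    ring
  -- the centered boundary loop
  set β : ℝ → ℂ := fun t => g (circ t) - g 0 with hβ
  have hβcont : ContinuousOn β (Icc 0 1) :=
    (hg.comp (circ_cont.continuousOn) (fun t _ => circ_mem_closedBall t)).sub continuousOn_const
  have hβnz : ∀ t ∈ Icc (0:ℝ) 1, β t ≠ 0 := by
    intro t _ h
    have heq : g (circ t) = g 0 := sub_eq_zero.mp h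
    have h2 : circ t = 0 := hinj (circ_mem_closedBall t) h0D heq
    exact circ_ne_zero t h2
  obtain ⟨dβ, hdβ⟩ := delta_exists hβcont hβnz
  -- homotopy between β and φ
  have hcont2 : ContinuousOn (fun p : ℝ × ℝ => g (circ p.2) - g (-(p.1:ℂ) * circ p.2))
      (Icc 0 1 ×ˢ Icc 0 1) := by
    apply ContinuousOn.sub
    · exact hg.comp (circ_cont.comp continuous_snd).continuousOn
        (fun p _ => circ_mem_closedBall p.2)
    · apply hg.comp (((Complex.continuous_ofReal.comp continuous_fst).neg.mul
        (circ_cont.comp continuous_snd)).continuousOn)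
      intro p hp
      exact hmem2 p.1 hp.1 p.2
  have hβφ : dβ = dφ := by
    apply delta_homotopy (H := fun u t => g (circ t) - g (-((u:ℝ):ℂ) * circ t))
      hcont2
    · intro u hu t _ h
      have heq : g (circ t) = g (-(u:ℂ) * circ t) := sub_eq_zero.mp h
      have h2 : circ t = -(u:ℂ) * circ t := hinj (circ_mem_closedBall t) (hmem2 u hu t) heq
      have h3 : (1 + (u:ℂ)) * circ t = 0 := by linear_combination h2
      rcases mul_eq_zero.mp h3 with h' | h'
      · have : (u:ℂ) = -1 := by linear_combination h'
        have : (u:ℝ) = -1 := by exact_mod_cast this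
        linarith [hu.1]
      · exact circ_ne_zero t h'
    · intro u _
      rw [circ_loop]
    · have : (fun t => g (circ t) - g (-((0:ℝ):ℂ) * circ t)) = β := by
        funext t
        rw [hβ]
        norm_num
      rwa [this]
    · have : (fun t => g (circ t) - g (-((1:ℝ):ℂ) * circ t)) = φ := by
        funext t
        rw [hφ]
        norm_num
      rwa [this]
  have hdβne : dβ ≠ 0 := hβφ ▸ hdφne
  -- now the main inclusion
  intro z hz
  by_contra hznot
  have hzg0 : z ≠ g 0 := by
    intro h
    exact hznot ⟨0, h0D, h.symm⟩
  -- loop around z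
  set γz : ℝ → ℂ := fun t => g (circ t) - z with hγz
  have hγzcont : ContinuousOn γz (Icc 0 1) :=
    (hg.comp (circ_cont.continuousOn) (fun t _ => circ_mem_closedBall t)).sub continuousOn_const
  -- leash : Delta γz dβ
  have hγzd : Delta γz dβ := by
    apply delta_leash hγzcont hβnz _ (by rw [hβ]; simp [circ_loop]) (by rw [hγz]; simp [circ_loop]) hdβ
    intro t _
    have h1 : γz t - β t = g 0 - z := by rw [hγz, hβ]; ring
    rw [h1]
    have h2 : ‖g 0 - z‖ = dist (g 0) z := (dist_eq_norm _ _).symm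
    have h3 : dist (g 0) z < r := by
      rw [dist_comm]
      exact mem_ball.mp hz
    have h4 : r ≤ ‖β t‖ := by
      have hginC : g (circ t) ∈ C := ⟨circ t, by rw [mem_sphere_zero_iff_norm]; exact circ_norm t, rfl⟩
      have hle := infDist_le_dist_of_mem (x := g 0) hginC
      rw [hβ]
      calc r ≤ dist (g 0) (g (circ t)) := hle
      _ = ‖g (circ t) - g 0‖ := by rw [dist_eq_norm, norm_sub_rev]
    linarith [h2 ▸ h3]
  -- homotopy to constant loop
  obtain ⟨dz, hdz⟩ := delta_exists hγzcont (by
    intro t _ h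
    exact hznot ⟨circ t, circ_mem_closedBall t, (sub_eq_zero.mp h)⟩)
  have hzero : (0:ℂ) = dz := by
    apply delta_homotopy (H := fun u t => g (((u:ℝ):ℂ) * circ t) - z)
    · apply ContinuousOn.sub _ continuousOn_const
      apply hg.comp (hcircmap.continuousOn)
      intro p hp
      exact hmem1 p.1 hp.1 p.2
    · intro u hu t _ h
      exact hznot ⟨(u:ℂ) * circ t, hmem1 u hu t, (sub_eq_zero.mp h)⟩
    · intro u _
      rw [circ_loop]
    · have : (fun t => g (((0:ℝ):ℂ) * circ t) - z) = (fun _ => g 0 - z) := by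
        funext t; norm_num
      rw [this]
      exact delta_const (sub_ne_zero.mpr (fun h => hzg0 h.symm))
    · have : (fun t => g (((1:ℝ):ℂ) * circ t) - z) = γz := by
        funext t; rw [hγz]; norm_num
      rwa [this]
  have : dz = dβ := delta_unique hdz hγzd
  rw [← this] at hdβne
  exact hdβne hzero.symm

/-- A shape has nonempty interior: poor man's invariance of domain. -/
theorem isShape_interior_nonempty {s : GShape} (hs : IsShape s) :
    ∃ c : Pt, ∃ ρ > (0:ℝ), ball c ρ ⊆ interior s := by
  classical
  obtain ⟨-, ⟨e⟩⟩ := hs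
  set E2 := EuclideanSpace ℝ (Fin 2)
  set κ : ℂ ≃ₗᵢ[ℝ] E2 := Complex.orthonormalBasisOneI.repr with hκ
  set cR : ℂ ≃ₜ Pt := Complex.equivRealProdCLM.toHomeomorph with hcR
  have hκmem : ∀ z : ℂ, z ∈ closedBall (0:ℂ) 1 → κ z ∈ closedBall (0:E2) 1 := by
    intro z hz
    rw [mem_closedBall_zero_iff] at hz ⊢
    rw [κ.norm_map]; exact hz
  set g : ℂ → ℂ := fun z =>
    if hz : z ∈ closedBall (0:ℂ) 1 then
      cR.symm ((e.symm ⟨κ z, hκmem z hz⟩ : s) : Pt)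
    else 0 with hgdef
  have hgval : ∀ z (hz : z ∈ closedBall (0:ℂ) 1),
      g z = cR.symm ((e.symm ⟨κ z, hκmem z hz⟩ : s) : Pt) := by
    intro z hz; rw [hgdef]; exact dif_pos hz
  have hgc : ContinuousOn g (closedBall 0 1) := by
    rw [continuousOn_iff_continuous_restrict]
    have : (closedBall (0:ℂ) 1).restrict g =
        fun x : closedBall (0:ℂ) 1 =>
          cR.symm ((e.symm ⟨κ x.1, hκmem x.1 x.2⟩ : s) : Pt) := by
      funext x
      exact hgval x.1 x.2
    rw [show (closedBall (0:ℂ) 1).domRestrict g = (closedBall (0:ℂ) 1).restrict g from rfl, this]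
    apply cR.symm.continuous.comp
    apply continuous_subtype_val.comp
    apply e.symm.continuous.comp
    apply Continuous.subtype_mk
    exact κ.continuous.comp continuous_subtype_val
  have hginj : InjOn g (closedBall 0 1) := by
    intro z₁ h₁ z₂ h₂ heq
    rw [hgval z₁ h₁, hgval z₂ h₂] at heq
    have h3 := cR.symm.injective heq
    have h4 := Subtype.val_injective h3
    have h5 := e.symm.injective h4
    have h6 : κ z₁ = κ z₂ := congrArg Subtype.val h5
    exact κ.injective h6
  obtain ⟨r, hrpos, hrsub⟩ := ball_subset_image_closedBall hgc hginj
  have himg : g '' closedBall 0 1 = cR.symm '' s := by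
    apply Set.Subset.antisymm
    · rintro w ⟨z, hz, rfl⟩
      rw [hgval z hz]
      exact ⟨_, (e.symm ⟨κ z, hκmem z hz⟩).2, rfl⟩
    · rintro w ⟨p, hp, rfl⟩
      have hzmem : κ.symm (e ⟨p, hp⟩).1 ∈ closedBall (0:ℂ) 1 := by
        rw [mem_closedBall_zero_iff, κ.symm.norm_map]
        exact mem_closedBall_zero_iff.mp (e ⟨p, hp⟩).2
      refine ⟨κ.symm (e ⟨p, hp⟩).1, hzmem, ?_⟩
      rw [hgval _ hzmem]
      congr 1
      have h7 : (⟨κ (κ.symm (e ⟨p, hp⟩).1), hκmem _ hzmem⟩ : closedBall (0:E2) 1)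
          = e ⟨p, hp⟩ := Subtype.ext (κ.apply_symm_apply _)
      rw [h7, e.symm_apply_apply]
  rw [himg] at hrsub
  -- transfer ball to interior of s
  have hball : ball (g 0) r ⊆ cR.symm '' s := hrsub
  have hopen : cR '' ball (g 0) r ⊆ interior s := by
    have h8 : cR '' ball (g 0) r ⊆ s := by
      rintro w ⟨y, hy, rfl⟩
      obtain ⟨p, hp, hpe⟩ := hball hy
      have : y = cR.symm p := hpe.symm
      rw [this, Homeomorph.apply_symm_apply]
      exact hp
    apply interior_maximal h8
    exact cR.isOpenMap _ isOpen_ball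
  -- cR is bi-Lipschitz-ish: just use that it's an open map to find a small ball
  have hmem : cR (g 0) ∈ cR '' ball (g 0) r := ⟨g 0, mem_ball_self hrpos, rfl⟩
  have hopen2 : IsOpen (cR '' ball (g 0) r) := cR.isOpenMap _ isOpen_ball
  obtain ⟨ρ, hρpos, hρsub⟩ := Metric.isOpen_iff.mp hopen2 _ hmem
  exact ⟨cR (g 0), ρ, hρpos, hρsub.trans hopen⟩

/-- scaling map on the plane -/
def σm (lam : ℝ) : Pt → Pt := fun p => lam • p

lemma σm_image_prod (lam : ℝ) (A B : Set ℝ) :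
    σm lam '' (A ×ˢ B) = ((lam * ·) '' A) ×ˢ ((lam * ·) '' B) := by
  ext ⟨x, y⟩
  constructor
  · rintro ⟨⟨p, q⟩, ⟨hp, hq⟩, heq⟩
    have h1 : lam * p = x := congrArg Prod.fst heq
    have h2 : lam * q = y := congrArg Prod.snd heq
    exact ⟨⟨p, hp, h1⟩, ⟨q, hq, h2⟩⟩
  · rintro ⟨⟨p, hp, hpx⟩, ⟨q, hq, hqy⟩⟩
    refine ⟨(p, q), ⟨hp, hq⟩, ?_⟩
    have : σm lam (p, q) = (lam * p, lam * q) := rfl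
    rw [this]
    simp only at hpx hqy
    rw [hpx, hqy]

lemma image_mul_Icc {lam a b : ℝ} (hl : 0 < lam) :
    (lam * ·) '' Icc a b = Icc (lam * a) (lam * b) := by
  ext x
  constructor
  · rintro ⟨p, ⟨h1, h2⟩, rfl⟩
    exact ⟨mul_le_mul_of_nonneg_left h1 hl.le, mul_le_mul_of_nonneg_left h2 hl.le⟩
  · rintro ⟨h1, h2⟩
    refine ⟨lam⁻¹ * x, ⟨?_, ?_⟩, by field_simp⟩
    · rw [le_inv_mul_iff₀ hl]; linarith
    · rw [inv_mul_le_iff₀ hl]; linarith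

lemma image_mul_singleton (lam y : ℝ) : (lam * ·) '' ({y} : Set ℝ) = {lam * y} := by
  simp

lemma σm_injective {lam : ℝ} (hl : lam ≠ 0) : Function.Injective (σm lam) :=
  smul_right_injective Pt hl

lemma σm_σm {lam : ℝ} (hl : lam ≠ 0) (g : Set Pt) :
    σm lam '' (σm lam⁻¹ '' g) = g := by
  rw [Set.image_image]
  have : ∀ p : Pt, σm lam (σm lam⁻¹ p) = p := by
    intro p
    simp only [σm, smul_smul]
    rw [mul_inv_cancel₀ hl, one_smul]
  simp only [this, Set.image_id']

lemma isHorizSeg_σm {lam : ℝ} (hl : 0 < lam) {g : Set Pt} (h : IsHorizSeg g) :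
    IsHorizSeg (σm lam '' g) := by
  obtain ⟨y, a, b, hab, rfl⟩ := h
  refine ⟨lam * y, lam * a, lam * b, by nlinarith, ?_⟩
  rw [σm_image_prod, image_mul_Icc hl, image_mul_singleton]

lemma isVertSeg_σm {lam : ℝ} (hl : 0 < lam) {g : Set Pt} (h : IsVertSeg g) :
    IsVertSeg (σm lam '' g) := by
  obtain ⟨x, a, b, hab, rfl⟩ := h
  refine ⟨lam * x, lam * a, lam * b, by nlinarith, ?_⟩
  rw [σm_image_prod, image_mul_Icc hl, image_mul_singleton]

lemma isMaximalHorizSegOf_σm {lam : ℝ} (hl : 0 < lam) {B g : Set Pt}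
    (h : IsMaximalHorizSegOf B g) : IsMaximalHorizSegOf (σm lam '' B) (σm lam '' g) := by
  obtain ⟨h1, h2, h3⟩ := h
  refine ⟨isHorizSeg_σm hl h1, Set.image_mono h2, ?_⟩
  intro s' hs' hsub hgs
  have hinv : IsHorizSeg (σm lam⁻¹ '' s') := isHorizSeg_σm (by positivity) hs'
  have hinvsub : σm lam⁻¹ '' s' ⊆ B := by
    intro p hp
    obtain ⟨q, hq, rfl⟩ := hp
    obtain ⟨b', hb', hbq⟩ := hsub hq
    have : σm lam⁻¹ (σm lam b') = b' := by
      simp only [σm, smul_smul]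
      rw [inv_mul_cancel₀ hl.ne', one_smul]
    rw [← hbq, this]
    exact hb'
  have hginv : g ⊆ σm lam⁻¹ '' s' := by
    intro p hp
    refine ⟨σm lam p, hgs ⟨p, hp, rfl⟩, ?_⟩
    simp only [σm, smul_smul]
    rw [inv_mul_cancel₀ hl.ne', one_smul]
  have := h3 _ hinv hinvsub hginv
  rw [← this, σm_σm hl.ne']

lemma isMaximalVertSegOf_σm {lam : ℝ} (hl : 0 < lam) {B g : Set Pt}
    (h : IsMaximalVertSegOf B g) : IsMaximalVertSegOf (σm lam '' B) (σm lam '' g) := by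
  obtain ⟨h1, h2, h3⟩ := h
  refine ⟨isVertSeg_σm hl h1, Set.image_mono h2, ?_⟩
  intro s' hs' hsub hgs
  have hinv : IsVertSeg (σm lam⁻¹ '' s') := isVertSeg_σm (by positivity) hs'
  have hinvsub : σm lam⁻¹ '' s' ⊆ B := by
    intro p hp
    obtain ⟨q, hq, rfl⟩ := hp
    obtain ⟨b', hb', hbq⟩ := hsub hq
    have : σm lam⁻¹ (σm lam b') = b' := by
      simp only [σm, smul_smul]
      rw [inv_mul_cancel₀ hl.ne', one_smul]
    rw [← hbq, this]
    exact hb'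
  have hginv : g ⊆ σm lam⁻¹ '' s' := by
    intro p hp
    refine ⟨σm lam p, hgs ⟨p, hp, rfl⟩, ?_⟩
    simp only [σm, smul_smul]
    rw [inv_mul_cancel₀ hl.ne', one_smul]
  have := h3 _ hinv hinvsub hginv
  rw [← this, σm_σm hl.ne']

/-- scaling as a homeomorphism -/
lemma frontier_scaleShape {lam : ℝ} (hl : lam ≠ 0) (s : GShape) :
    frontier (scaleShape lam s) = σm lam '' frontier s := by
  have h := (Homeomorph.smulOfNeZero (α := Pt) lam hl).image_frontier s
  have hcoe : ⇑(Homeomorph.smulOfNeZero (α := Pt) lam hl) = σm lam := rfl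
  rw [hcoe] at h
  exact h.symm

lemma interior_scaleShape {lam : ℝ} (hl : lam ≠ 0) (s : GShape) :
    interior (scaleShape lam s) = σm lam '' interior s := by
  have h := (Homeomorph.smulOfNeZero (α := Pt) lam hl).image_interior s
  have hcoe : ⇑(Homeomorph.smulOfNeZero (α := Pt) lam hl) = σm lam := rfl
  rw [hcoe] at h
  exact h.symm

/-- height of a horizontal segment / abscissa of a vertical one -/
def ht (g : Set Pt) : ℝ := sSup (Prod.snd '' g)
def ab (g : Set Pt) : ℝ := sSup (Prod.fst '' g)

lemma ht_eq {g : Set Pt} (hg : IsHorizSeg g) {y : ℝ} (hy : ∀ p ∈ g, Prod.snd p = y) :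
    ht g = y := by
  obtain ⟨y', a, b, hab, rfl⟩ := hg
  have hmem : ((a, y') : Pt) ∈ Icc a b ×ˢ ({y'} : Set ℝ) := ⟨⟨le_refl a, hab.le⟩, rfl⟩
  have hyy : y' = y := hy _ hmem
  have himg : Prod.snd '' (Icc a b ×ˢ ({y'} : Set ℝ)) = {y'} := by
    apply Set.Subset.antisymm
    · rintro w ⟨⟨p, q⟩, ⟨_, hq⟩, rfl⟩
      exact hq
    · rintro w hw
      exact ⟨(a, y'), hmem, hw.symm⟩
  rw [ht, himg, csSup_singleton, hyy]

lemma ab_eq {g : Set Pt} (hg : IsVertSeg g) {x : ℝ} (hx : ∀ p ∈ g, Prod.fst p = x) :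
    ab g = x := by
  obtain ⟨x', a, b, hab, rfl⟩ := hg
  have hmem : ((x', a) : Pt) ∈ ({x'} : Set ℝ) ×ˢ Icc a b := ⟨rfl, ⟨le_refl a, hab.le⟩⟩
  have hxx : x' = x := hx _ hmem
  have himg : Prod.fst '' (({x'} : Set ℝ) ×ˢ Icc a b) = {x'} := by
    apply Set.Subset.antisymm
    · rintro w ⟨⟨p, q⟩, ⟨hp, _⟩, rfl⟩
      exact hp
    · rintro w hw
      exact ⟨(x', a), hmem, hw.symm⟩
  rw [ab, himg, csSup_singleton, hxx]

/-- positive diameter of a shape -/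
lemma diam_pos_of_isShape {s : GShape} (hs : IsShape s) : 0 < Metric.diam s := by
  obtain ⟨hcomp, ⟨e⟩⟩ := hs
  have h0 : (0 : EuclideanSpace ℝ (Fin 2)) ∈ closedBall (0 : EuclideanSpace ℝ (Fin 2)) 1 :=
    mem_closedBall_self zero_le_one
  set v : EuclideanSpace ℝ (Fin 2) := EuclideanSpace.single (0 : Fin 2) (1:ℝ) with hv
  have hvnorm : ‖v‖ = 1 := by rw [hv, EuclideanSpace.norm_single]; simp
  have hvmem : v ∈ closedBall (0 : EuclideanSpace ℝ (Fin 2)) 1 := by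
    rw [mem_closedBall_zero_iff, hvnorm]
  have hvne : v ≠ 0 := by
    intro h
    rw [h] at hvnorm
    simp at hvnorm
  set x := e.symm ⟨0, h0⟩ with hx
  set y := e.symm ⟨v, hvmem⟩ with hy
  have hxy : x ≠ y := by
    intro h
    have := e.symm.injective h
    have h2 : (0 : EuclideanSpace ℝ (Fin 2)) = v := congrArg Subtype.val this
    exact hvne h2.symm
  have hxyv : (x : Pt) ≠ (y : Pt) := fun h => hxy (Subtype.ext h)
  have hdist : 0 < dist (x : Pt) (y : Pt) := dist_pos.mpr hxyv
  have hle := Metric.dist_le_diam_of_mem hcomp.isBounded x.2 y.2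
  linarith

lemma diam_scaleShape {lam : ℝ} (hl : 0 ≤ lam) (s : GShape) :
    Metric.diam (scaleShape lam s) = lam * Metric.diam s := by
  have h1 : scaleShape lam s = lam • s := Set.image_smul
  rw [h1, diam_smul₀, Real.norm_eq_abs, _root_.abs_of_nonneg hl]

/-- per-shape square lemma -/
lemma square_fits {s : GShape} (hs : IsShape s) :
    ∃ b : ℝ, 0 < b ∧ ∀ lam : ℝ, b < lam →
      ∃ v : Pt, shTranslate v unitSquare ⊆ interior (scaleShape lam s) := by
  obtain ⟨c, ρ, hρpos, hball⟩ := isShape_interior_nonempty hs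
  refine ⟨1/ρ, by positivity, ?_⟩
  intro lam hlam
  have hlampos : 0 < lam := lt_trans (by positivity) hlam
  refine ⟨lam • c - ((1/2 : ℝ), (1/2 : ℝ)), ?_⟩
  intro p hp
  obtain ⟨q, hq, rfl⟩ := hp
  -- q + v ∈ closedBall (lam • c) (1/2)
  have hstep1 : dist (q + (lam • c - ((1/2 : ℝ), (1/2 : ℝ)))) (lam • c) ≤ 1/2 := by
    rw [dist_eq_norm]
    have heq : q + (lam • c - ((1/2 : ℝ), (1/2 : ℝ))) - lam • c
        = q - ((1/2 : ℝ), (1/2 : ℝ)) := by abel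
    rw [heq, Prod.norm_def]
    obtain ⟨hq1, hq2⟩ := hq
    simp only [Prod.fst_sub, Prod.snd_sub]
    apply max_le
    · rw [Real.norm_eq_abs, abs_le]
      constructor
      · have := hq1.1
        norm_num
        linarith [hq1.1]
      · norm_num
        linarith [hq1.2]
    · rw [Real.norm_eq_abs, abs_le]
      constructor
      · norm_num; linarith [hq2.1]
      · norm_num; linarith [hq2.2]
  -- closedBall (lam•c) (1/2) ⊆ σm lam '' ball c ρ
  have hstep2 : ∀ w : Pt, dist w (lam • c) ≤ 1/2 → w ∈ σm lam '' ball c ρ := by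
    intro w hw
    refine ⟨lam⁻¹ • w, ?_, ?_⟩
    · rw [mem_ball]
      have h1 : dist (lam⁻¹ • w) c = ‖lam⁻¹‖ * dist w (lam • c) := by
        have h2 : c = lam⁻¹ • (lam • c) := by
          rw [smul_smul, inv_mul_cancel₀ hlampos.ne', one_smul]
        nth_rewrite 1 [h2]
        exact dist_smul₀ (lam⁻¹) w (lam • c)
      rw [h1, Real.norm_eq_abs, abs_of_pos (by positivity)]
      have h3 : lam⁻¹ < ρ := by
        rw [← one_div]
        rw [div_lt_iff₀ hlampos]
        rw [div_lt_iff₀ hρpos] at hlam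
        nlinarith
      nlinarith [hρpos, hlampos, inv_pos.mpr hlampos]
    · simp only [σm, smul_smul]
      rw [mul_inv_cancel₀ hlampos.ne', one_smul]
  have h4 := hstep2 _ hstep1
  rw [interior_scaleShape hlampos.ne']
  exact Set.image_mono hball h4

end PotatoAux

end

open PotatoAux

/-- For a finite shapeset of potatoes, the set of bad scaling factors is
countable; in particular there are arbitrarily large good scaling factors `lam` such that
moreover every shape of `lam • S` contains a translate of the closed unit square in its
interior. -/
theorem bad_scalings_countable
    (S : Set GShape) (hSfin : S.Finite) (hSpot : ∀ s ∈ S, IsPotato s) :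
    (BadScalings S).Countable ∧
    ∀ M : ℝ, ∃ lam : ℝ, M < lam ∧ 0 < lam ∧ lam ∉ BadScalings S ∧
      ∀ s ∈ S, ∃ v : Pt, shTranslate v unitSquare ⊆ interior (scaleShape lam s) := by
  have hcount : (BadScalings S).Countable := by
    set U : Set ℝ := ⋃ s ∈ S,
        ((⋃ h₁ ∈ {seg : Set Pt | IsMaximalHorizSegOf (frontier s) seg},
          ⋃ h₂ ∈ {seg : Set Pt | IsMaximalHorizSegOf (frontier s) seg},
          ⋃ n : ℤ, {(n:ℝ) / (ht h₁ - ht h₂)}) ∪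
         ((⋃ h₁ ∈ {seg : Set Pt | IsMaximalVertSegOf (frontier s) seg},
          ⋃ h₂ ∈ {seg : Set Pt | IsMaximalVertSegOf (frontier s) seg},
          ⋃ n : ℤ, {(n:ℝ) / (ab h₁ - ab h₂)}) ∪
         (⋃ n : ℤ, {(n:ℝ) / Metric.diam s}))) with hU
    have hUc : U.Countable := by
      apply hSfin.countable.biUnion
      intro s hs
      apply Set.Countable.union
      · apply ((hSpot s hs).2.1).biUnion
        intro h₁ _
        apply ((hSpot s hs).2.1).biUnion
        intro h₂ _
        exact countable_iUnion (fun n => countable_singleton _)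
      apply Set.Countable.union
      · apply ((hSpot s hs).2.2).biUnion
        intro h₁ _
        apply ((hSpot s hs).2.2).biUnion
        intro h₂ _
        exact countable_iUnion (fun n => countable_singleton _)
      · exact countable_iUnion (fun n => countable_singleton _)
    apply Set.Countable.mono _ hUc
    rintro lam ⟨hpos, hbad⟩
    have hlne : lam ≠ 0 := hpos.ne'
    have hinvpos : 0 < lam⁻¹ := by positivity
    rcases hbad with ⟨s, hs, g₁, g₂, hg₁, hg₂, hne, y₁, y₂, hy₁, hy₂, n, hn0, hyn⟩ |
      ⟨s, hs, g₁, g₂, hg₁, hg₂, hne, x₁, x₂, hx₁, hx₂, n, hn0, hxn⟩ |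
      ⟨s, hs, n, hdiam⟩
    · -- horizontal case
      rw [frontier_scaleShape hlne] at hg₁ hg₂
      have hBB : σm lam⁻¹ '' (σm lam '' (frontier s)) = frontier s := by
        have := σm_σm (inv_ne_zero hlne) (frontier s)
        rwa [inv_inv] at this
      have hm₁ := isMaximalHorizSegOf_σm hinvpos hg₁
      have hm₂ := isMaximalHorizSegOf_σm hinvpos hg₂
      rw [hBB] at hm₁ hm₂
      have hhne : σm lam⁻¹ '' g₁ ≠ σm lam⁻¹ '' g₂ := by
        intro h
        apply hne
        have h1 := congrArg (fun t => σm lam '' t) h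
        simpa only [σm_σm hlne] using h1
      have hhy : ∀ i : Set Pt, ∀ y : ℝ, (∀ p ∈ i, Prod.snd p = y) →
          ∀ p ∈ σm lam⁻¹ '' i, Prod.snd p = lam⁻¹ * y := by
        rintro i y hy p ⟨q, hq, rfl⟩
        show (lam⁻¹ • q).2 = lam⁻¹ * y
        rw [Prod.smul_snd, hy q hq, smul_eq_mul]
      have hht₁ : ht (σm lam⁻¹ '' g₁) = lam⁻¹ * y₁ := ht_eq hm₁.1 (hhy g₁ y₁ hy₁)
      have hht₂ : ht (σm lam⁻¹ '' g₂) = lam⁻¹ * y₂ := ht_eq hm₂.1 (hhy g₂ y₂ hy₂)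
      have hnR : (n:ℝ) ≠ 0 := Int.cast_ne_zero.mpr hn0
      have hdiff : ht (σm lam⁻¹ '' g₁) - ht (σm lam⁻¹ '' g₂) = lam⁻¹ * n := by
        rw [hht₁, hht₂, ← mul_sub, hyn]
      have hlameq : lam = (n:ℝ) / (ht (σm lam⁻¹ '' g₁) - ht (σm lam⁻¹ '' g₂)) := by
        rw [hdiff]
        field_simp
      rw [hU]
      apply mem_biUnion hs
      apply mem_union_left
      apply mem_biUnion (show (σm lam⁻¹ '' g₁) ∈ {seg : Set Pt |
        IsMaximalHorizSegOf (frontier s) seg} from hm₁)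
      apply mem_biUnion (show (σm lam⁻¹ '' g₂) ∈ {seg : Set Pt |
        IsMaximalHorizSegOf (frontier s) seg} from hm₂)
      apply mem_iUnion.mpr ⟨n, _⟩
      · exact hlameq
    · -- vertical case
      rw [frontier_scaleShape hlne] at hg₁ hg₂
      have hBB : σm lam⁻¹ '' (σm lam '' (frontier s)) = frontier s := by
        have := σm_σm (inv_ne_zero hlne) (frontier s)
        rwa [inv_inv] at this
      have hm₁ := isMaximalVertSegOf_σm hinvpos hg₁
      have hm₂ := isMaximalVertSegOf_σm hinvpos hg₂
      rw [hBB] at hm₁ hm₂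
      have hhne : σm lam⁻¹ '' g₁ ≠ σm lam⁻¹ '' g₂ := by
        intro h
        apply hne
        have h1 := congrArg (fun t => σm lam '' t) h
        simpa only [σm_σm hlne] using h1
      have hhx : ∀ i : Set Pt, ∀ x : ℝ, (∀ p ∈ i, Prod.fst p = x) →
          ∀ p ∈ σm lam⁻¹ '' i, Prod.fst p = lam⁻¹ * x := by
        rintro i x hx p ⟨q, hq, rfl⟩
        show (lam⁻¹ • q).1 = lam⁻¹ * x
        rw [Prod.smul_fst, hx q hq, smul_eq_mul]
      have hab₁ : ab (σm lam⁻¹ '' g₁) = lam⁻¹ * x₁ := ab_eq hm₁.1 (hhx g₁ x₁ hx₁)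
      have hab₂ : ab (σm lam⁻¹ '' g₂) = lam⁻¹ * x₂ := ab_eq hm₂.1 (hhx g₂ x₂ hx₂)
      have hnR : (n:ℝ) ≠ 0 := Int.cast_ne_zero.mpr hn0
      have hlameq : lam = (n:ℝ) / (ab (σm lam⁻¹ '' g₁) - ab (σm lam⁻¹ '' g₂)) := by
        rw [hab₁, hab₂, ← mul_sub, hxn]
        field_simp
      rw [hU]
      apply mem_biUnion hs
      apply mem_union_right
      apply mem_union_left
      apply mem_biUnion (show (σm lam⁻¹ '' g₁) ∈ {seg : Set Pt |
        IsMaximalVertSegOf (frontier s) seg} from hm₁)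
      apply mem_biUnion (show (σm lam⁻¹ '' g₂) ∈ {seg : Set Pt |
        IsMaximalVertSegOf (frontier s) seg} from hm₂)
      apply mem_iUnion.mpr ⟨n, _⟩
      · exact hlameq
    · -- diameter case
      have hdpos := diam_pos_of_isShape (hSpot s hs).1
      have hlameq : lam = (n:ℝ) / Metric.diam s := by
        rw [diam_scaleShape hpos.le] at hdiam
        field_simp [hdpos.ne']
        linarith [hdiam]
      rw [hU]
      apply mem_biUnion hs
      apply mem_union_right
      apply mem_union_right
      apply mem_iUnion.mpr ⟨n, _⟩
      · exact hlameq
  refine ⟨hcount, ?_⟩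
  intro M
  -- uniform bound for the squares
  have hbound : ∃ b : ℝ, ∀ s ∈ S, ∀ lam : ℝ, b < lam →
      ∃ v : Pt, shTranslate v unitSquare ⊆ interior (scaleShape lam s) := by
    have key : ∀ T : Set GShape, T.Finite → (∀ s ∈ T, IsPotato s) →
        ∃ b : ℝ, ∀ s ∈ T, ∀ lam : ℝ, b < lam →
          ∃ v : Pt, shTranslate v unitSquare ⊆ interior (scaleShape lam s) := by
      intro T hT
      refine Set.Finite.induction_on (motive := fun T _ => (∀ s ∈ T, IsPotato s) →
          ∃ b : ℝ, ∀ s ∈ T, ∀ lam : ℝ, b < lam →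
            ∃ v : Pt, shTranslate v unitSquare ⊆ interior (scaleShape lam s)) T hT ?_ ?_
      · exact fun _ => ⟨0, fun s hs => absurd hs (notMem_empty s)⟩
      · intro a T' ha hT' ih hpot
        obtain ⟨b₁, hb₁⟩ := ih (fun s hs => hpot s (mem_insert_of_mem a hs))
        obtain ⟨b₂, hb₂pos, hb₂⟩ := square_fits (hpot a (mem_insert a T')).1
        refine ⟨max b₁ b₂, ?_⟩
        rintro s (rfl | hs) lam hlam
        · exact hb₂ lam (lt_of_le_of_lt (le_max_right _ _) hlam)
        · exact hb₁ s hs lam (lt_of_le_of_lt (le_max_left _ _) hlam)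
    exact key S hSfin hSpot
  obtain ⟨b, hb⟩ := hbound
  set a : ℝ := max M (max b 0) with ha
  -- pick lam in (a, ∞) avoiding the countable bad set, via measure
  have hEx : (Ioi a \ BadScalings S).Nonempty := by
    by_contra h
    rw [Set.not_nonempty_iff_eq_empty, Set.diff_eq_empty] at h
    have h1 : MeasureTheory.volume (Ioi a) ≤ MeasureTheory.volume (BadScalings S) :=
      MeasureTheory.measure_mono h
    rw [hcount.measure_zero, Real.volume_Ioi] at h1
    simp at h1
  obtain ⟨lam, hlmem⟩ := hEx
  obtain ⟨hlgt, hlbad⟩ := hlmem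
  rw [mem_Ioi] at hlgt
  have hM : M < lam := lt_of_le_of_lt (le_max_left _ _) hlgt
  have hpos : 0 < lam :=
    lt_of_le_of_lt (le_trans (le_max_right _ _) (le_max_right _ _)) hlgt
  have hblam : b < lam :=
    lt_of_le_of_lt (le_trans (le_max_left _ _) (le_max_right _ _)) hlgt
  exact ⟨lam, hM, hpos, hlbad, fun s hs => hb s hs lam hblam⟩
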